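/- The compositional inverse G(X) of the Prouhet–Thue–Morse series F(X) over F_2 satisfies X^2 G(X)^3 + X(1+X) G(X)^2 + (X^2+1) G(X) + X(X+1) = 0. -/

import Mathlib

open PowerSeries Finset

section Aux
variable {R : Type*} [CommRing R]

lemma coeff_pow_eq_zero' {g : R⟦X⟧} (hg : constantCoeff g = 0)
    {k n : ℕ} (hkn : k < n) : coeff k (g ^ n) = 0 := by
  have hx : (X : R⟦X⟧) ∣ g := X_dvd_iff.mpr hg
  have h2 : (X : R⟦X⟧) ^ n ∣ g ^ n := pow_dvd_pow_of_dvd hx n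
  exact X_pow_dvd_iff.mp h2 k hkn

lemma stable' {g : R⟦X⟧} (hg : constantCoeff g = 0) (a : ℕ → R) {k N : ℕ} (hk : k < N) :
    coeff k (∑ n ∈ range N, C (a n) * g ^ n) =
      coeff k (∑ n ∈ range (k + 1), C (a n) * g ^ n) := by
  rw [map_sum, map_sum]
  refine (Finset.sum_subset (Finset.range_subset_range.mpr hk) ?_).symm
  intro n _ hn
  rw [coeff_C_mul, coeff_pow_eq_zero' hg (by simpa using hn), mul_zero]

lemma sum_square {f : ℕ → ℕ → R} {k : ℕ} (hf : ∀ i j, k < i + j → f i j = 0) :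
    ∑ n ∈ range (k + 1), ∑ p ∈ Finset.HasAntidiagonal.antidiagonal n, f p.1 p.2
      = ∑ i ∈ range (k + 1), ∑ j ∈ range (k + 1), f i j := by
  have h1 : ∀ n ∈ range (k+1), ∑ p ∈ Finset.HasAntidiagonal.antidiagonal n, f p.1 p.2
      = ∑ i ∈ range (k+1), f i (n - i) * (if i ≤ n then 1 else 0) := by
    intro n hn
    rw [Finset.Nat.sum_antidiagonal_eq_sum_range_succ_mk]
    rw [← Finset.sum_subset (Finset.range_subset_range.mpr (Finset.mem_range.mp hn))]
    · exact Finset.sum_congr rfl fun i hi => by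
        rw [if_pos (Nat.lt_succ_iff.mp (Finset.mem_range.mp hi)), mul_one]
    · intro i _ hi
      rw [if_neg (by simpa [Nat.lt_succ_iff] using hi), mul_zero]
  rw [Finset.sum_congr rfl h1, Finset.sum_comm]
  refine Finset.sum_congr rfl fun i hi => ?_
  have e1 : ∑ n ∈ range (k+1), f i (n - i) * (if i ≤ n then 1 else 0)
      = ∑ n ∈ Finset.Ico i (k+1), f i (n - i) := by
    rw [show Finset.Ico i (k+1) = Finset.filter (fun n => i ≤ n) (range (k+1)) from by
      ext n; simp [Nat.lt_succ_iff]; omega]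
    rw [Finset.sum_filter]
    exact Finset.sum_congr rfl fun n _ => by split <;> simp
  rw [e1, Finset.sum_Ico_eq_sum_range]
  have e2 : ∀ j ∈ range (k+1-i), f i (i + j - i) = f i j := fun j _ => by
    congr 1; omega
  rw [Finset.sum_congr rfl e2]
  refine Finset.sum_subset (Finset.range_subset_range.mpr (by omega)) fun j _ hj => ?_
  exact hf i j (by simp [Nat.lt_succ_iff] at hj ⊢; omega)

noncomputable def pcomp (g h : R⟦X⟧) : R⟦X⟧ :=
  PowerSeries.mk fun k => coeff k (∑ n ∈ range (k + 1), C (coeff n h) * g ^ n)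

lemma coeff_pcomp {g : R⟦X⟧} (hg : constantCoeff g = 0) (h : R⟦X⟧) {k N : ℕ}
    (hk : k < N) :
    coeff k (pcomp g h) = coeff k (∑ n ∈ range N, C (coeff n h) * g ^ n) := by
  rw [pcomp, coeff_mk, ← stable' hg _ hk]

lemma pcomp_add (g h1 h2 : R⟦X⟧) : pcomp g (h1 + h2) = pcomp g h1 + pcomp g h2 := by
  ext k
  simp [pcomp, coeff_mk, add_mul, Finset.sum_add_distrib]

lemma pcomp_C (g : R⟦X⟧) (a : R) : pcomp g (C a) = C a := by
  ext k
  rw [pcomp, coeff_mk, Finset.sum_eq_single 0]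
  · simp
  · intro n _ hn
    rw [coeff_C, if_neg hn]; simp
  · simp

lemma pcomp_one (g : R⟦X⟧) : pcomp g 1 = 1 := by
  have := pcomp_C g 1; simpa using this

lemma pcomp_X {g : R⟦X⟧} (hg : constantCoeff g = 0) : pcomp g X = g := by
  ext k
  rw [pcomp, coeff_mk]
  rcases Nat.eq_zero_or_pos k with hk | hk
  · subst hk
    simp [coeff_zero_eq_constantCoeff, hg]
  · rw [Finset.sum_eq_single 1]
    · simp
    · intro n _ hn
      rw [coeff_X, if_neg hn]; simp
    · intro h; exact absurd (Finset.mem_range.mpr (by omega)) h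

lemma pcomp_mul {g : R⟦X⟧} (hg : constantCoeff g = 0) (h1 h2 : R⟦X⟧) :
    pcomp g (h1 * h2) = pcomp g h1 * pcomp g h2 := by
  ext k
  rw [coeff_pcomp hg _ (Nat.lt_succ_self k), coeff_mul]
  have hre : ∀ p ∈ Finset.HasAntidiagonal.antidiagonal k,
      coeff p.1 (pcomp g h1) * coeff p.2 (pcomp g h2) =
      coeff p.1 (∑ i ∈ range (k+1), C (coeff i h1) * g ^ i) *
      coeff p.2 (∑ j ∈ range (k+1), C (coeff j h2) * g ^ j) := by
    intro p hp
    rw [Finset.HasAntidiagonal.mem_antidiagonal] at hp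
    rw [coeff_pcomp hg _ (by omega : p.1 < k+1), coeff_pcomp hg _ (by omega : p.2 < k+1)]
  rw [Finset.sum_congr rfl hre, ← coeff_mul, Finset.sum_mul_sum]
  have hterm : ∀ i ∈ range (k+1), ∀ j ∈ range (k+1),
      (C (coeff i h1) * g ^ i) * (C (coeff j h2) * g ^ j) =
      C (coeff i h1) * (C (coeff j h2) * g ^ (i + j)) := by
    intro i _ j _; rw [pow_add]; ring
  rw [Finset.sum_congr rfl fun i hi => Finset.sum_congr rfl (hterm i hi)]
  simp only [map_sum, coeff_C_mul]
  simp only [coeff_mul, Finset.sum_mul]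
  rw [Finset.sum_congr rfl (fun n hn => Finset.sum_congr rfl
      (fun p hp => show coeff p.1 h1 * coeff p.2 h2 * coeff k (g ^ n)
          = coeff p.1 h1 * (coeff p.2 h2 * coeff k (g ^ (p.1 + p.2))) by
        rw [Finset.HasAntidiagonal.mem_antidiagonal.mp hp, mul_assoc]))]
  exact sum_square (f := fun i j => coeff i h1 * (coeff j h2 * coeff k (g ^ (i + j))))
    (k := k) (fun i j hij => by simp [coeff_pow_eq_zero' hg hij])

lemma pcomp_pow {g : R⟦X⟧} (hg : constantCoeff g = 0) (h : R⟦X⟧) (n : ℕ) :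
    pcomp g (h ^ n) = pcomp g h ^ n := by
  induction n with
  | zero => simpa using pcomp_one g
  | succ m ih => rw [pow_succ, pow_succ, pcomp_mul hg, ih]

lemma coeff_sq (f : (ZMod 2)⟦X⟧) (m : ℕ) :
    coeff m (f * f) = if 2 ∣ m then coeff (m / 2) f else 0 := by
  have haa : ∀ a : ZMod 2, a * a = a := by decide
  have hadd : ∀ a : ZMod 2, a + a = 0 := by decide
  rw [coeff_mul]
  by_cases hm : 2 ∣ m
  · obtain ⟨r, rfl⟩ := hm
    rw [if_pos ⟨r, rfl⟩]
    have hmem : ((r, r) : ℕ × ℕ) ∈ Finset.HasAntidiagonal.antidiagonal (2 * r) := by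
      rw [Finset.HasAntidiagonal.mem_antidiagonal]; omega
    rw [← Finset.add_sum_erase _ _ hmem]
    have h0 : ∑ p ∈ (Finset.HasAntidiagonal.antidiagonal (2*r)).erase (r,r),
        coeff p.1 f * coeff p.2 f = 0 := by
      refine Finset.sum_involution (fun p _ => (p.2, p.1)) ?_ ?_ ?_ ?_
      · rintro ⟨a, b⟩ _
        simp only
        rw [mul_comm]
        exact hadd _
      · rintro ⟨a, b⟩ hp _
        rcases Finset.mem_erase.mp hp with ⟨hne, hmem'⟩
        rw [Finset.HasAntidiagonal.mem_antidiagonal] at hmem'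
        simp only at hmem' ⊢
        intro heq
        have h1 : b = a := (Prod.mk.injEq _ _ _ _).mp heq |>.1
        exact hne (by simp only [Prod.mk.injEq]; omega)
      · rintro ⟨a, b⟩ hp
        rcases Finset.mem_erase.mp hp with ⟨hne, hmem'⟩
        rw [Finset.HasAntidiagonal.mem_antidiagonal] at hmem'
        refine Finset.mem_erase.mpr ⟨?_, Finset.HasAntidiagonal.mem_antidiagonal.mpr (by simp only at hmem' ⊢; omega)⟩
        intro heq
        have h1 : b = r ∧ a = r := by
          have := (Prod.mk.injEq _ _ _ _).mp heq
          exact ⟨this.1, this.2⟩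
        exact hne (by simp only [Prod.mk.injEq]; omega)
      · rintro ⟨a, b⟩ _; rfl
    rw [h0, add_zero, haa, show 2*r/2 = r from by omega]
  · rw [if_neg hm]
    refine Finset.sum_involution (fun p _ => (p.2, p.1)) ?_ ?_ ?_ ?_
    · rintro ⟨a, b⟩ _
      simp only
      rw [mul_comm]
      exact hadd _
    · rintro ⟨a, b⟩ hp _
      rw [Finset.HasAntidiagonal.mem_antidiagonal] at hp
      simp only at hp ⊢
      intro heq
      have h1 : b = a := (Prod.mk.injEq _ _ _ _).mp heq |>.1
      exact hm ⟨a, by omega⟩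
    · rintro ⟨a, b⟩ hp
      rw [Finset.HasAntidiagonal.mem_antidiagonal] at hp
      exact Finset.HasAntidiagonal.mem_antidiagonal.mpr (by simp only at hp ⊢; omega)
    · rintro ⟨a, b⟩ _; rfl

lemma coeff_relation {t : ℕ → ZMod 2} (h0 : t 0 = 0)
    (he : ∀ n, t (2 * n) = t n) (ho : ∀ n, t (2 * n + 1) = 1 + t n) (k : ℕ)
    (s : ℕ → ZMod 2) (hs : ∀ m, s m = if 2 ∣ m then t (m / 2) else 0) :
    s k + (if 1 ≤ k then s (k-1) else 0) + (if 2 ≤ k then s (k-2) else 0)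
      + (if 3 ≤ k then s (k-3) else 0) + t k + (if 2 ≤ k then t (k-2) else 0)
      + (if k = 1 then 1 else 0) = 0 := by
  have h2 : (2 : ZMod 2) = 0 := by decide
  obtain ⟨r, rfl | rfl⟩ : ∃ r, k = 2*r ∨ k = 2*r+1 := ⟨k/2, by omega⟩
  · rcases Nat.eq_zero_or_pos r with rfl | hr
    · simp [hs, h0]
    · simp only [hs]
      split_ifs <;> try (exfalso; omega)
      all_goals
        simp only [show 2*r/2 = r from by omega, show 2*r-2 = 2*(r-1) from by omega,
          show 2*(r-1)/2 = r-1 from by omega, he r, he (r-1)]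
      all_goals linear_combination (t r + t (r-1)) * h2
  · rcases Nat.eq_zero_or_pos r with rfl | hr
    · simp only [hs]
      split_ifs <;> try (exfalso; omega)
      all_goals simp only [show 2*0+1-1 = 2*0 from rfl, show (2*0)/2 = 0 from rfl, he 0, ho 0, h0]
      all_goals first
        | linear_combination (1 + t 0) * h2
        | linear_combination (t 0) * h2
        | linear_combination (-(t 0)) * h2
        | linear_combination h2
    · simp only [hs]
      split_ifs <;> try (exfalso; omega)
      all_goals
        simp only [show 2*r+1-1 = 2*r from by omega, show (2*r)/2 = r from by omega,
          show 2*r+1-2 = 2*(r-1)+1 from by omega, show 2*r+1-3 = 2*(r-1) from by omega,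
          show 2*(r-1)/2 = r-1 from by omega, he r, ho r, ho (r-1), he (r-1)]
      all_goals first
        | linear_combination (1 + t r + t (r-1)) * h2
        | linear_combination (t r + t (r-1)) * h2
        | linear_combination (1 + t r) * h2
        | linear_combination (t r) * h2
        | linear_combination h2
lemma funceq {t : ℕ → ZMod 2} (h0 : t 0 = 0)
    (he : ∀ n, t (2 * n) = t n) (ho : ∀ n, t (2 * n + 1) = 1 + t n) :
    (PowerSeries.mk t) * (PowerSeries.mk t) * (1 + X + X ^ 2 + X ^ 3) + (PowerSeries.mk t) * (1 + X ^ 2) + X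
      = (0 : (ZMod 2)⟦X⟧) := by
  ext k
  set S : (ZMod 2)⟦X⟧ := PowerSeries.mk t * PowerSeries.mk t with hS
  have hsc : ∀ m, coeff m S = if 2 ∣ m then t (m/2) else 0 := by
    intro m; rw [hS, coeff_sq]; split_ifs <;> simp [coeff_mk]
  have expand : S * (1 + X + X ^ 2 + X ^ 3) + PowerSeries.mk t * (1 + X ^ 2) + X
      = S + S * X ^ 1 + S * X ^ 2 + S * X ^ 3 + PowerSeries.mk t + PowerSeries.mk t * X ^ 2 + X ^ 1 := by
    ring
  rw [expand, map_add, map_add, map_add, map_add, map_add, map_add]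
  simp only [coeff_mul_X_pow', coeff_X_pow, coeff_mk, map_zero]
  exact coeff_relation h0 he ho k (fun m => coeff m S) hsc

end Aux
/-- The compositional inverse `G` of the Prouhet–Thue–Morse series
`F(X) = ∑ tₙ Xⁿ` over `𝔽₂` satisfies
`X²G³ + X(1+X)G² + (X²+1)G + X(X+1) = 0`.
Composition with a series having zero constant coefficient is expressed
coefficient-wise: the `k`-th coefficient of `F ∘ G` equals the `k`-th coefficient
of `∑_{n ≤ k} tₙ Gⁿ` since `Gⁿ` has order at least `n`. -/
theorem inverse_ptm_cubic_equation (t : ℕ → ZMod 2) (h0 : t 0 = 0)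
    (he : ∀ n, t (2 * n) = t n) (ho : ∀ n, t (2 * n + 1) = 1 + t n)
    (G : PowerSeries (ZMod 2)) (hG0 : constantCoeff G = 0)
    (hFG : ∀ k : ℕ, coeff k
      (∑ n ∈ Finset.range (k + 1), PowerSeries.C (t n) * G ^ n) =
      coeff k X)
    (hGF : ∀ k : ℕ, coeff k
      (∑ n ∈ Finset.range (k + 1),
        PowerSeries.C (coeff n G) * (PowerSeries.mk t) ^ n) =
      coeff k X) :
    X ^ 2 * G ^ 3 + X * (1 + X) * G ^ 2 + (X ^ 2 + 1) * G + X * (X + 1) = 0 := by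
  have hF : pcomp G (PowerSeries.mk t) = X := by
    ext k
    rw [pcomp, coeff_mk]
    simp only [PowerSeries.coeff_mk]
    exact hFG k
  have hz : pcomp G (0 : (ZMod 2)⟦X⟧) = 0 := by
    have h := pcomp_add G 0 0
    rw [add_zero] at h
    exact (add_eq_left.mp h.symm)
  have h5 : pcomp G ((PowerSeries.mk t) * (PowerSeries.mk t) * (1 + X + X ^ 2 + X ^ 3)
      + (PowerSeries.mk t) * (1 + X ^ 2) + X) = pcomp G 0 := by
    rw [funceq h0 he ho]
  simp only [pcomp_add, pcomp_mul hG0, pcomp_pow hG0, pcomp_one, pcomp_X hG0, hF, hz] at h5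
  linear_combination h5
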